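/- Let η be a probability measure on (0,∞), and for each integer n≥1 define p_n(x) := ∫_{(0,∞)} (4πs)^{−n/2} e^{−|x|²/(4s)} η(ds) for x∈ℝ^n. Then for every d≥1, every x∈ℝ^d with x≠0, and every coordinate index i, the partial derivative ∂p_d/∂x^i exists at x and equals −2π x^i p_{d+2}((x,0,0)), where (x,0,0)∈ℝ^{d+2} is x augmented by two zero coordinates. -/

import Mathlib

open MeasureTheory Real Set Filter Topology
open scoped ENNReal NNReal RealInnerProductSpace

noncomputable section

/-- `φ` is a Bernstein function with representation `φ(λ) = b λ + ∫_{(0,∞)} (1 - e^{-λ t}) μ(dt)`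
(valid for `λ > 0`), where `b ≥ 0` and `μ` is a Lévy measure on `(0,∞)`. -/
def IsBernstein (φ : ℝ → ℝ) (b : ℝ) (μ : MeasureTheory.Measure ℝ) : Prop :=
  0 ≤ b ∧ (∫⁻ t in Set.Ioi (0:ℝ), ENNReal.ofReal (min 1 t) ∂μ) < ∞ ∧
    ∀ lam : ℝ, 0 < lam →
      φ lam = b * lam + ∫ t in Set.Ioi (0:ℝ), (1 - Real.exp (-lam * t)) ∂μ

/-- The Bernstein function is nonzero: `b > 0` or `μ` is not the zero measure on `(0,∞)`. -/
def BernsteinNonzero (b : ℝ) (μ : MeasureTheory.Measure ℝ) : Prop :=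
  0 < b ∨ μ (Set.Ioi 0) ≠ 0

/-- The lower scaling condition: `c (R/r)^{δ₀} ≤ φ(R)/φ(r)` for all `0 < r < R`. -/
def LowerScaling (φ : ℝ → ℝ) (c δ₀ : ℝ) : Prop :=
  ∀ r R : ℝ, 0 < r → r < R → c * (R / r) ^ δ₀ ≤ φ R / φ r

/-- The heat kernel of `φ(Δ)` on `ℝ^d`:
`p(t,x) = (2π)^{-d} ∫ e^{i ξ·x} e^{-t φ(|ξ|²)} dξ` (a real number). -/
def heatKernel (d : ℕ) (φ : ℝ → ℝ) (t : ℝ) (x : EuclideanSpace ℝ (Fin d)) : ℝ :=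
  (2 * Real.pi) ^ (-(d:ℝ)) *
    (∫ ξ : EuclideanSpace ℝ (Fin d),
      Complex.exp (Complex.I * (⟪ξ, x⟫ : ℂ)) *
        Complex.exp (-(t * φ (‖ξ‖ ^ 2) : ℝ) : ℂ)).re

/-- The Wright-type function
`φ_{α,β}(t,r) = t^{-β} ∑_{k≥0} (-r t^{-α})^k / (k! Γ(1-β-αk))`, with the convention
`1/Γ(z) = 0` at nonpositive integers (which holds for Mathlib's `Real.Gamma`). -/
def wright (α β t r : ℝ) : ℝ :=
  t ^ (-β) * ∑' k : ℕ, (-(r * t ^ (-α))) ^ k / ((k.factorial : ℝ) * Real.Gamma (1 - β - α * k))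

/-- `q_{α,β}(t,x) = ∫_0^∞ p(r,x) φ_{α,β}(t,r) dr`. -/
def qKernel (d : ℕ) (φ : ℝ → ℝ) (α β : ℝ) (t : ℝ) (x : EuclideanSpace ℝ (Fin d)) : ℝ :=
  ∫ r in Set.Ioi (0:ℝ), heatKernel d φ r x * wright α β t r

/-- The two-parameter Mittag-Leffler function `E_{a,b}(z) = ∑_{k≥0} z^k / Γ(ak+b)`. -/
def mittagLeffler (a b z : ℝ) : ℝ := ∑' k : ℕ, z ^ k / Real.Gamma (a * k + b)

/-- Fourier transform with the convention `ℱ g (ξ) = ∫ e^{-i x·ξ} g(x) dx`. -/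
def FT (d : ℕ) (g : EuclideanSpace ℝ (Fin d) → ℂ) (ξ : EuclideanSpace ℝ (Fin d)) : ℂ :=
  ∫ x : EuclideanSpace ℝ (Fin d), Complex.exp (-Complex.I * (⟪x, ξ⟫ : ℂ)) * g x

/-- Inverse Fourier transform with the convention
`ℱ^{-1} g (x) = (2π)^{-d} ∫ e^{i x·ξ} g(ξ) dξ`. -/
def FTinv (d : ℕ) (g : EuclideanSpace ℝ (Fin d) → ℂ) (x : EuclideanSpace ℝ (Fin d)) : ℂ :=
  ((2 * Real.pi) ^ (-(d:ℝ)) : ℝ) *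
    ∫ ξ : EuclideanSpace ℝ (Fin d), Complex.exp (Complex.I * (⟪x, ξ⟫ : ℂ)) * g ξ

/-- `φ(Δ) g = - ℱ^{-1}[φ(|ξ|²) ℱ g]` for a function `g : ℝ^d → ℝ`. -/
def phiDelta (d : ℕ) (φ : ℝ → ℝ) (g : EuclideanSpace ℝ (Fin d) → ℝ)
    (x : EuclideanSpace ℝ (Fin d)) : ℝ :=
  -(FTinv d (fun ξ => (φ (‖ξ‖ ^ 2) : ℂ) * FT d (fun y => (g y : ℂ)) ξ) x).re

/-- The spacetime singular integral operator
`𝒢 f (t,x) = ∫_{-∞}^t ∫_{ℝ^d} q_{α,1}(t-s,y) (φ(Δ) f(s,·))(x-y) dy ds`. -/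
def Gop (d : ℕ) (φ : ℝ → ℝ) (α : ℝ) (f : ℝ × EuclideanSpace ℝ (Fin d) → ℝ)
    (z : ℝ × EuclideanSpace ℝ (Fin d)) : ℝ :=
  ∫ s in Set.Iio z.1, ∫ y : EuclideanSpace ℝ (Fin d),
    qKernel d φ α 1 (z.1 - s) y * phiDelta d φ (fun w => f (s, w)) (z.2 - y)


/-- The subordinated Gaussian density in dimension `n`:
`p_n(x) = ∫_{(0,∞)} (4πs)^{-n/2} e^{-|x|²/(4s)} η(ds)`. -/
def subGauss (n : ℕ) (η : MeasureTheory.Measure ℝ) (x : EuclideanSpace ℝ (Fin n)) : ℝ :=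
  ∫ s in Set.Ioi (0:ℝ), (4 * Real.pi * s) ^ (-(n:ℝ) / 2) * Real.exp (-‖x‖ ^ 2 / (4 * s)) ∂η

/-- The vector `(x, 0, 0) ∈ ℝ^{d+2}`: `x` augmented by two zero coordinates. -/
def padTwo (d : ℕ) (x : EuclideanSpace ℝ (Fin d)) : EuclideanSpace ℝ (Fin (d + 2)) :=
  (WithLp.equiv 2 (∀ _ : Fin (d + 2), ℝ)).symm
    (fun j => if h : (j : ℕ) < d then x ⟨j, h⟩ else 0)


/-- Auxiliary bound: `s^{-a} e^{-c/s}` is uniformly bounded on `(0,∞)` for `a ≥ 0`, `c > 0`. -/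
lemma auxM (a cc : ℝ) (ha : 0 ≤ a) (hcc : 0 < cc) :
    ∃ M : ℝ, 0 ≤ M ∧ ∀ s : ℝ, 0 < s → s ^ (-a) * Real.exp (-(cc/s)) ≤ M := by
  set k := ⌈a⌉₊ with hk
  refine ⟨1 + (k.factorial : ℝ) / cc ^ k, by positivity, fun s hs => ?_⟩
  have hfac : (0:ℝ) ≤ (k.factorial : ℝ) / cc ^ k := by positivity
  rcases le_or_gt 1 s with h1 | h1
  · have h2 : s ^ (-a) ≤ 1 := Real.rpow_le_one_of_one_le_of_nonpos h1 (by linarith)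
    have h3 : Real.exp (-(cc/s)) ≤ 1 := Real.exp_le_one_iff.mpr (by
      have : 0 ≤ cc / s := by positivity
      linarith)
    nlinarith [Real.exp_pos (-(cc/s)), Real.rpow_nonneg hs.le (-a)]
  · have hu : (0:ℝ) < cc / s := by positivity
    have h3 : (cc/s)^k / (k.factorial : ℝ) ≤ Real.exp (cc/s) :=
      Real.pow_div_factorial_le_exp _ hu.le k
    have hpk : (0:ℝ) < (cc/s)^k / (k.factorial : ℝ) := by positivity
    have h4 : Real.exp (-(cc/s)) ≤ ((cc/s)^k / (k.factorial : ℝ))⁻¹ := by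
      rw [Real.exp_neg]
      exact inv_anti₀ hpk h3
    have h5 : ((cc/s)^k / (k.factorial : ℝ))⁻¹ = (k.factorial : ℝ) * s ^ k / cc ^ k := by
      rw [inv_div, div_pow]
      field_simp
    have h6 : s ^ (-a) * Real.exp (-(cc/s))
        ≤ s ^ (-a) * ((k.factorial : ℝ) * s ^ k / cc ^ k) := by
      rw [← h5]
      exact mul_le_mul_of_nonneg_left h4 (Real.rpow_nonneg hs.le _)
    have h7 : s ^ (-a) * ((k.factorial : ℝ) * s ^ k / cc ^ k)
        = ((k.factorial : ℝ) / cc ^ k) * (s ^ (-a) * s ^ (k:ℝ)) := by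
      rw [Real.rpow_natCast]
      ring
    have h8 : s ^ (-a) * s ^ (k:ℝ) = s ^ ((k:ℝ) - a) := by
      rw [← Real.rpow_add hs]; ring_nf
    have h9 : s ^ ((k:ℝ) - a) ≤ 1 :=
      Real.rpow_le_one hs.le h1.le (by
        have := Nat.le_ceil a
        simpa [hk] using sub_nonneg.mpr this)
    calc s ^ (-a) * Real.exp (-(cc/s))
        ≤ ((k.factorial : ℝ) / cc ^ k) * (s ^ ((k:ℝ) - a)) := by
          rw [← h8, ← h7]; exact h6
      _ ≤ ((k.factorial : ℝ) / cc ^ k) * 1 := mul_le_mul_of_nonneg_left h9 hfac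
      _ ≤ 1 + (k.factorial : ℝ) / cc ^ k := by linarith

set_option maxHeartbeats 1000000 in
/-- For a probability measure `η` on `(0,∞)`, the partial derivative
`∂ p_d / ∂ x^i` exists at every `x ≠ 0` and equals `-2π x^i p_{d+2}((x,0,0))`. -/
theorem stmt6 (η : MeasureTheory.Measure ℝ) (hη : MeasureTheory.IsProbabilityMeasure η)
    (hsupp : η (Set.Iic 0) = 0) (d : ℕ) (hd : 1 ≤ d)
    (x : EuclideanSpace ℝ (Fin d)) (hx : x ≠ 0) (i : Fin d) :
    HasDerivAt (fun h : ℝ => subGauss d η (x + h • EuclideanSpace.single i (1:ℝ)))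
      (-2 * Real.pi * x i * subGauss (d + 2) η (padTwo d x)) 0 := by
  classical
  have hπ : (0:ℝ) < Real.pi := Real.pi_pos
  have hr : (0:ℝ) < ‖x‖ := norm_pos_iff.mpr hx
  set c : ℝ := x i with hcdef
  set μ := η.restrict (Set.Ioi (0:ℝ)) with hμ
  have hinner : ⟪x, EuclideanSpace.single i (1:ℝ)⟫ = c := by
    simp [EuclideanSpace.inner_single_right, hcdef]
  have habs_c : |c| ≤ ‖x‖ := by
    have := abs_real_inner_le_norm x (EuclideanSpace.single i (1:ℝ))
    simpa [hinner] using this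
  have hnorm : ∀ h : ℝ, ‖x + h • EuclideanSpace.single i (1:ℝ)‖ ^ 2
      = ‖x‖ ^ 2 + 2 * h * c + h ^ 2 := by
    intro h
    rw [norm_add_sq_real, real_inner_smul_right, hinner, norm_smul,
      EuclideanSpace.norm_single]
    simp [mul_pow, sq_abs]
    ring
  have hpad : ‖padTwo d x‖ = ‖x‖ := by
    have happ : ∀ j : Fin (d+2),
        padTwo d x j = if h : (j : ℕ) < d then x ⟨j, h⟩ else 0 := fun j => rfl
    rw [EuclideanSpace.norm_eq, EuclideanSpace.norm_eq]
    congr 1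
    rw [Fin.sum_univ_castSucc, Fin.sum_univ_castSucc]
    simp only [happ, Fin.coe_castSucc, Fin.val_last, Fin.is_lt, dif_pos, lt_irrefl,
      Nat.lt_irrefl, dif_neg, not_lt, Nat.le_succ, le_refl]
    simp [Fin.eta]
  set F : ℝ → ℝ → ℝ := fun h s =>
    (4 * Real.pi * s) ^ (-(d:ℝ)/2) *
      Real.exp (-((‖x‖ ^ 2 + 2 * h * c + h ^ 2) / (4 * s))) with hF
  set F' : ℝ → ℝ → ℝ := fun h s =>
    (4 * Real.pi * s) ^ (-(d:ℝ)/2) *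
      (Real.exp (-((‖x‖ ^ 2 + 2 * h * c + h ^ 2) / (4 * s))) *
        (-((2 * c + 2 * h) / (4 * s)))) with hF'
  have key : ∀ h : ℝ, subGauss d η (x + h • EuclideanSpace.single i (1:ℝ))
      = ∫ s, F h s ∂μ := by
    intro h
    unfold subGauss
    simp only [hnorm h, neg_div, hF, hμ]
  -- measurability
  have hmeasF : ∀ h : ℝ, AEStronglyMeasurable (F h) μ := by
    intro h
    apply Measurable.aestronglyMeasurable
    fun_prop
  have hmeasF' : AEStronglyMeasurable (F' 0) μ := by
    apply Measurable.aestronglyMeasurable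
    fun_prop
  -- integrability of F 0
  obtain ⟨M₀, hM₀0, hM₀⟩ := auxM ((d:ℝ)/2) (‖x‖^2/4) (by positivity) (by positivity)
  replace hM₀ : ∀ s : ℝ, 0 < s → s ^ (-(d:ℝ)/2) * Real.exp (-(‖x‖^2/4/s)) ≤ M₀ := by
    intro s hs
    rw [neg_div]
    exact hM₀ s hs
  have hintF0 : Integrable (F 0) μ := by
    refine Integrable.mono' (integrable_const ((4*Real.pi) ^ (-(d:ℝ)/2) * M₀))
      (hmeasF 0) ?_
    filter_upwards [ae_restrict_mem measurableSet_Ioi] with s hs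
    have hs' : (0:ℝ) < s := hs
    have e1 : (4*Real.pi*s) ^ (-(d:ℝ)/2) = (4*Real.pi) ^ (-(d:ℝ)/2) * s ^ (-(d:ℝ)/2) :=
      Real.mul_rpow (by positivity) hs'.le
    have e2 : -((‖x‖ ^ 2 + 2 * 0 * c + 0 ^ 2) / (4 * s)) = -((‖x‖^2/4)/s) := by
      ring
    have : ‖F 0 s‖ = (4*Real.pi) ^ (-(d:ℝ)/2) * (s ^ (-(d:ℝ)/2) * Real.exp (-((‖x‖^2/4)/s))) := by
      rw [Real.norm_eq_abs, hF]
      simp only [e2]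
      rw [e1, abs_mul, abs_mul, abs_of_pos (Real.exp_pos _),
        abs_of_nonneg (Real.rpow_nonneg (by positivity) _),
        abs_of_nonneg (Real.rpow_nonneg hs'.le _), mul_assoc]
    rw [this]
    exact mul_le_mul_of_nonneg_left (hM₀ s hs') (by positivity)
  -- the uniform bound for F'
  obtain ⟨M₁, hM₁0, hM₁⟩ := auxM ((d:ℝ)/2 + 1) (‖x‖^2/16) (by positivity) (by positivity)
  set K : ℝ := (4*Real.pi) ^ (-(d:ℝ)/2) * ((|c| + 1)/2) with hK
  set ε : ℝ := min 1 (‖x‖/2) with hε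
  have hεpos : 0 < ε := by
    apply lt_min one_pos
    positivity
  have hball : ∀ h : ℝ, h ∈ Metric.ball (0:ℝ) ε → |h| < 1 ∧ |h| ≤ ‖x‖/2 := by
    intro h hh
    rw [Metric.mem_ball, Real.dist_eq, sub_zero] at hh
    exact ⟨lt_of_lt_of_le hh (min_le_left _ _), (lt_of_lt_of_le hh (min_le_right _ _)).le⟩
  have hg_lower : ∀ h : ℝ, |h| ≤ ‖x‖/2 →
      ‖x‖^2/4 ≤ ‖x‖ ^ 2 + 2 * h * c + h ^ 2 := by
    intro h hh
    have h1 : -(2*h*c) ≤ 2* |h| * |c| := by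
      calc -(2*h*c) ≤ |2*h*c| := neg_le_abs _
        _ = 2* |h| * |c| := by rw [abs_mul, abs_mul, abs_two]
    have h2 : |h| * |c| ≤ |h| *‖x‖ := mul_le_mul_of_nonneg_left habs_c (abs_nonneg h)
    have h3 : h^2 = |h|^2 := (sq_abs h).symm
    nlinarith [mul_nonneg (sub_nonneg.mpr hh) (by linarith : (0:ℝ) ≤ 3*‖x‖/2 - |h|)]
  have hbound : ∀ᵐ s ∂μ, ∀ h ∈ Metric.ball (0:ℝ) ε, ‖F' h s‖ ≤ K * M₁ := by
    filter_upwards [ae_restrict_mem measurableSet_Ioi] with s hs h hh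
    have hs' : (0:ℝ) < s := hs
    obtain ⟨hh1, hh2⟩ := hball h hh
    have hg := hg_lower h hh2
    have hA : (0:ℝ) < (4*Real.pi*s) ^ (-(d:ℝ)/2) := Real.rpow_pos_of_pos (by positivity) _
    have e1 : (4*Real.pi*s) ^ (-(d:ℝ)/2) = (4*Real.pi) ^ (-(d:ℝ)/2) * s ^ (-(d:ℝ)/2) :=
      Real.mul_rpow (by positivity) hs'.le
    have habs : ‖F' h s‖ = (4*Real.pi*s) ^ (-(d:ℝ)/2) *
        (Real.exp (-((‖x‖ ^ 2 + 2 * h * c + h ^ 2) / (4 * s))) * (|2*c + 2*h| / (4*s))) := by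
      rw [Real.norm_eq_abs, hF']
      rw [abs_mul, abs_mul, abs_neg, abs_div, abs_of_pos hA,
        abs_of_pos (Real.exp_pos _), abs_of_pos (by positivity : (0:ℝ) < 4*s)]
    rw [habs]
    have hexp : Real.exp (-((‖x‖ ^ 2 + 2 * h * c + h ^ 2) / (4 * s)))
        ≤ Real.exp (-((‖x‖^2/16)/s)) := by
      rw [Real.exp_le_exp, neg_le_neg_iff, div_le_div_iff₀ (by positivity) (by positivity)]
      nlinarith
    have habs2 : |2*c + 2*h| ≤ 2* |c| + 2 := by
      calc |2*c + 2*h| ≤ |2*c| + |2*h| := abs_add_le _ _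
        _ = 2* |c| + 2* |h| := by rw [abs_mul, abs_mul]; simp
        _ ≤ 2* |c| + 2 := by linarith
    calc (4*Real.pi*s) ^ (-(d:ℝ)/2) *
        (Real.exp (-((‖x‖ ^ 2 + 2 * h * c + h ^ 2) / (4 * s))) * (|2*c + 2*h| / (4*s)))
        ≤ (4*Real.pi*s) ^ (-(d:ℝ)/2) *
          (Real.exp (-((‖x‖^2/16)/s)) * ((2* |c| + 2) / (4*s))) := by
          apply mul_le_mul_of_nonneg_left _ hA.le
          apply mul_le_mul hexp _ (by positivity) (Real.exp_pos _).le
          gcongr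
      _ = K * (s ^ (-((d:ℝ)/2 + 1)) * Real.exp (-((‖x‖^2/16)/s))) := by
          rw [e1, hK]
          have hspow : s ^ (-(d:ℝ)/2) * s⁻¹ = s ^ (-((d:ℝ)/2 + 1)) := by
            rw [← Real.rpow_neg_one s, ← Real.rpow_add hs']
            ring_nf
          rw [← hspow]
          field_simp
          ring
      _ ≤ K * M₁ := by
          apply mul_le_mul_of_nonneg_left (hM₁ s hs') ?_
          rw [hK]; positivity
  -- differentiability in h
  have hdiff : ∀ᵐ s ∂μ, ∀ h ∈ Metric.ball (0:ℝ) ε,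
      HasDerivAt (fun h => F h s) (F' h s) h := by
    filter_upwards [ae_restrict_mem measurableSet_Ioi] with s hs h _
    have hP : HasDerivAt (fun t : ℝ => ‖x‖^2 + 2*t*c + t^2) (2*c + 2*h) h := by
      have p1 : HasDerivAt (fun t : ℝ => 2*t*c) (2*c) h := by
        simpa using ((hasDerivAt_id h).const_mul 2).mul_const c
      have p2 : HasDerivAt (fun t : ℝ => t^2) (2*h) h := by
        simpa using hasDerivAt_pow 2 h
      exact (((hasDerivAt_const h (‖x‖^2)).add p1).add p2).congr_deriv (by ring)
    have := (((hP.div_const (4*s)).neg).exp).const_mul ((4*Real.pi*s) ^ (-(d:ℝ)/2))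
    simpa [hF, hF', mul_comm] using this
  have main := hasDerivAt_integral_of_dominated_loc_of_deriv_le (Metric.ball_mem_nhds 0 hεpos)
    (Filter.Eventually.of_forall hmeasF) (hintF0) hmeasF' hbound
    (integrable_const _) hdiff
  have hfeq : (fun h : ℝ => subGauss d η (x + h • EuclideanSpace.single i (1:ℝ)))
      = fun h : ℝ => ∫ s, F h s ∂μ := funext key
  have hval : (∫ s, F' 0 s ∂μ) = -2 * Real.pi * c * subGauss (d+2) η (padTwo d x) := by
    unfold subGauss
    rw [hpad, ← MeasureTheory.integral_const_mul]
    refine MeasureTheory.setIntegral_congr_fun measurableSet_Ioi fun s hs => ?_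
    have hs' : (0:ℝ) < s := hs
    have h4 : (0:ℝ) < 4*Real.pi*s := by positivity
    have hsplit : (4*Real.pi*s) ^ (-((d:ℕ)+2:ℝ)/2) = (4*Real.pi*s) ^ (-(d:ℝ)/2) * (4*Real.pi*s)⁻¹ := by
      rw [← Real.rpow_neg_one (4*Real.pi*s), ← Real.rpow_add h4]
      ring_nf
    rw [hF']
    push_cast
    rw [hsplit]
    have : -((‖x‖ ^ 2 + 2 * 0 * c + 0 ^ 2) / (4 * s)) = -‖x‖^2/(4*s) := by ring
    rw [this]
    field_simp
    ring
  rw [hfeq, ← hval]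
  exact main.2
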